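/- Let p ≥ 2, let h be an integer with h > 1, let k ∈ {1, …, p−1}, and let S be the submonoid of ℕ^p generated by {e₁, …, e_{p−1}, 2e_p, 3e_p, e_p + h·e_k} ∪ {e_p + e_i : i ∈ {1, …, p−1}, i ≠ k}. Then the set of gaps of S is ℕ^p \ S = {e_p + m·e_k : 0 ≤ m ≤ h−1}; in particular S is an ℕ^p-semigroup of genus h, and its embedding dimension is 2p. -/

import Mathlib

/-- `S ⊆ ℕ^p` contains `0` and is closed under addition. -/
def IsSubmonoidSet {p : ℕ} (S : Set (Fin p → ℕ)) : Prop :=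
  (0 : Fin p → ℕ) ∈ S ∧ ∀ x ∈ S, ∀ y ∈ S, x + y ∈ S

/-- `s` is a minimal generator of `S`: it is a nonzero element of `S` that is not a
sum of two nonzero elements of `S`. -/
def IsMinGen {p : ℕ} (S : Set (Fin p → ℕ)) (s : Fin p → ℕ) : Prop :=
  s ∈ S ∧ s ≠ 0 ∧ ∀ a ∈ S, ∀ b ∈ S, a ≠ 0 → b ≠ 0 → a + b ≠ s

/-- The (unique) minimal generating set of `S`. -/
def minGens {p : ℕ} (S : Set (Fin p → ℕ)) : Set (Fin p → ℕ) :=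
  {s | IsMinGen S s}

/-- The generating set
$\{e_1,…,e_{p-1},2e_p,3e_p,e_p+he_k\} ∪ \{e_p+e_i \mid i ∈ [p-1]\setminus\{k\}\}$,
where the distinguished index $p$ corresponds to $⟨p-1,\_⟩ : \mathrm{Fin}\ p$. -/
def gens9 (p h : ℕ) (hp : 2 ≤ p) (k : Fin p) : Set (Fin p → ℕ) :=
  ({x | ∃ j : Fin p, j ≠ ⟨p - 1, by omega⟩ ∧ x = Pi.single j 1}
      ∪ {(2 : ℕ) • Pi.single (⟨p - 1, by omega⟩ : Fin p) 1,
          (3 : ℕ) • Pi.single (⟨p - 1, by omega⟩ : Fin p) 1,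
          Pi.single (⟨p - 1, by omega⟩ : Fin p) 1 + h • Pi.single k 1})
    ∪ {x | ∃ j : Fin p, j ≠ ⟨p - 1, by omega⟩ ∧ j ≠ k ∧
        x = Pi.single (⟨p - 1, by omega⟩ : Fin p) 1 + Pi.single j 1}

/-- The gap predicate: `x = e_P + m e_k` with `m < h`, coordinate-wise form. -/
def gapPred (p h : ℕ) (hp : 2 ≤ p) (k : Fin p) (x : Fin p → ℕ) : Prop :=
  x ⟨p - 1, by omega⟩ = 1 ∧ x k < h ∧
    ∀ j : Fin p, j ≠ ⟨p - 1, by omega⟩ → j ≠ k → x j = 0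


lemma memA {p h : ℕ} {hp : 2 ≤ p} {k : Fin p} (j : Fin p)
    (hj : j ≠ (⟨p - 1, by omega⟩ : Fin p)) :
    (Pi.single j 1 : Fin p → ℕ) ∈ gens9 p h hp k :=
  Or.inl (Or.inl ⟨j, hj, rfl⟩)

lemma memB2 {p h : ℕ} {hp : 2 ≤ p} {k : Fin p} :
    ((2 : ℕ) • Pi.single (⟨p - 1, by omega⟩ : Fin p) 1 : Fin p → ℕ) ∈ gens9 p h hp k :=
  Or.inl (Or.inr (Set.mem_insert _ _))

lemma memB3 {p h : ℕ} {hp : 2 ≤ p} {k : Fin p} :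
    ((3 : ℕ) • Pi.single (⟨p - 1, by omega⟩ : Fin p) 1 : Fin p → ℕ) ∈ gens9 p h hp k :=
  Or.inl (Or.inr (Set.mem_insert_of_mem _ (Set.mem_insert _ _)))

lemma memBh {p h : ℕ} {hp : 2 ≤ p} {k : Fin p} :
    (Pi.single (⟨p - 1, by omega⟩ : Fin p) 1 + h • Pi.single k 1 : Fin p → ℕ) ∈
      gens9 p h hp k :=
  Or.inl (Or.inr (Set.mem_insert_of_mem _ (Set.mem_insert_of_mem _ rfl)))

lemma memC {p h : ℕ} {hp : 2 ≤ p} {k : Fin p} (j : Fin p)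
    (hj1 : j ≠ (⟨p - 1, by omega⟩ : Fin p)) (hj2 : j ≠ k) :
    (Pi.single (⟨p - 1, by omega⟩ : Fin p) 1 + Pi.single j 1 : Fin p → ℕ) ∈ gens9 p h hp k :=
  Or.inr ⟨j, hj1, hj2, rfl⟩

lemma not_gapPred_of_mem {p : ℕ} (hp : 2 ≤ p) {h : ℕ} (hh : 0 < h) {k : Fin p}
    (hk : (k : ℕ) < p - 1) {x : Fin p → ℕ}
    (hx : x ∈ AddSubmonoid.closure (gens9 p h hp k)) : ¬ gapPred p h hp k x := by
  have hkP : k ≠ (⟨p - 1, by omega⟩ : Fin p) := Fin.ne_of_val_ne (by simpa using by omega)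
  let T : AddSubmonoid (Fin p → ℕ) :=
    { carrier := {x | ¬ gapPred p h hp k x}
      zero_mem' := by rintro ⟨h1, -, -⟩; simp at h1
      add_mem' := by
        rintro a b ha hb ⟨h1, h2, h3⟩
        rw [Pi.add_apply] at h1
        rw [Pi.add_apply] at h2
        have h3' : ∀ j : Fin p, j ≠ ⟨p - 1, by omega⟩ → j ≠ k → a j = 0 ∧ b j = 0 := by
          intro j hj hjk
          have := h3 j hj hjk
          rw [Pi.add_apply] at this
          omega
        rcases le_or_gt (a ⟨p - 1, by omega⟩) 0 with h0 | h0
        · exact hb ⟨by omega, by omega, fun j hj hjk => (h3' j hj hjk).2⟩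
        · exact ha ⟨by omega, by omega, fun j hj hjk => (h3' j hj hjk).1⟩ }
  have hle : AddSubmonoid.closure (gens9 p h hp k) ≤ T := by
    rw [AddSubmonoid.closure_le]
    rintro g (((⟨j, hj, rfl⟩) | hB) | ⟨j, hj1, hj2, rfl⟩)
    · rintro ⟨h1, -, -⟩
      rw [Pi.single_apply] at h1
      simp [Ne.symm hj] at h1
    · rcases hB with rfl | rfl | rfl
      · rintro ⟨h1, -, -⟩
        rw [Pi.smul_apply, Pi.single_apply] at h1
        simp at h1
      · rintro ⟨h1, -, -⟩
        rw [Pi.smul_apply, Pi.single_apply] at h1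
        simp at h1
      · rintro ⟨-, h2, -⟩
        rw [Pi.add_apply, Pi.smul_apply, Pi.single_apply, Pi.single_apply] at h2
        simp [hkP] at h2
    · rintro ⟨-, -, h3⟩
      have := h3 j hj1 hj2
      rw [Pi.add_apply, Pi.single_apply, Pi.single_apply] at this
      simp [Ne.symm hj1] at this
  exact hle hx

lemma single_eq_smul {p : ℕ} (j : Fin p) (c : ℕ) :
    Pi.single j c = c • (Pi.single j 1 : Fin p → ℕ) := by
  funext i
  rw [Pi.smul_apply, Pi.single_apply, Pi.single_apply]
  split <;> simp

lemma mem_closure_of_apply_eq_zero {p : ℕ} (hp : 2 ≤ p) (h : ℕ) (k : Fin p)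
    {y : Fin p → ℕ} (hy : y ⟨p - 1, by omega⟩ = 0) :
    y ∈ AddSubmonoid.closure (gens9 p h hp k) := by
  have hy' : y = ∑ j, Pi.single j (y j) := (Finset.univ_sum_single y).symm
  rw [hy']
  apply AddSubmonoid.sum_mem
  intro j _
  by_cases hj : j = (⟨p - 1, by omega⟩ : Fin p)
  · subst hj
    rw [hy, Pi.single_zero]
    exact AddSubmonoid.zero_mem _
  · rw [single_eq_smul]
    exact AddSubmonoid.nsmul_mem _ (AddSubmonoid.subset_closure (memA j hj)) _

lemma mem_closure_of_not_gapPred {p : ℕ} (hp : 2 ≤ p) {h : ℕ} {k : Fin p}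
    (hk : (k : ℕ) < p - 1) {x : Fin p → ℕ}
    (hx : ¬ gapPred p h hp k x) :
    x ∈ AddSubmonoid.closure (gens9 p h hp k) := by
  have hkP : k ≠ (⟨p - 1, by omega⟩ : Fin p) := Fin.ne_of_val_ne (by simpa using by omega)
  set P : Fin p := ⟨p - 1, by omega⟩ with hP
  set S := AddSubmonoid.closure (gens9 p h hp k) with hS
  rcases Nat.lt_or_ge (x P) 1 with h0 | h0
  · exact mem_closure_of_apply_eq_zero hp h k (Nat.lt_one_iff.mp h0)
  rcases Nat.lt_or_ge (x P) 2 with h1 | h2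
  · -- x P = 1
    have hxP : x P = 1 := by omega
    rcases Nat.lt_or_ge (x k) h with hkh | hkh
    · -- some other coordinate is nonzero
      have : ¬ ∀ j : Fin p, j ≠ P → j ≠ k → x j = 0 := fun hc => hx ⟨hxP, hkh, hc⟩
      push_neg at this
      obtain ⟨j, hj1, hj2, hj3⟩ := this
      have hdec : x = (Pi.single P 1 + Pi.single j 1) +
          Function.update (Function.update x j (x j - 1)) P 0 := by
        funext i
        rw [Pi.add_apply, Pi.add_apply, Function.update_apply, Function.update_apply,
          Pi.single_apply, Pi.single_apply]
        by_cases hiP : i = P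
        · subst hiP
          simp [Ne.symm hj1, hxP]
        · by_cases hij : i = j
          · subst hij
            simp [hiP, hj1]
            omega
          · simp [hiP, hij]
      rw [hdec]
      refine AddSubmonoid.add_mem _ (AddSubmonoid.subset_closure (memC j hj1 hj2)) ?_
      exact mem_closure_of_apply_eq_zero hp h k (by simp [hP])
    · -- x k ≥ h
      have hdec : x = (Pi.single P 1 + h • Pi.single k 1) +
          Function.update (Function.update x k (x k - h)) P 0 := by
        funext i
        rw [Pi.add_apply, Pi.add_apply, Function.update_apply, Function.update_apply,
          Pi.smul_apply, Pi.single_apply, Pi.single_apply]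
        by_cases hiP : i = P
        · subst hiP
          simp [Ne.symm hkP, hxP]
        · by_cases hik : i = k
          · subst hik
            simp [hiP]
            omega
          · simp [hiP, hik]
      rw [hdec]
      refine AddSubmonoid.add_mem _ (AddSubmonoid.subset_closure memBh) ?_
      exact mem_closure_of_apply_eq_zero hp h k (by simp [hP])
  · -- x P ≥ 2 : x P = 2a + 3b
    obtain ⟨a, b, hab⟩ : ∃ a b, x P = 2 * a + 3 * b := by
      rcases Nat.even_or_odd (x P) with ⟨c, hc⟩ | ⟨c, hc⟩
      · exact ⟨c, 0, by omega⟩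
      · exact ⟨c - 1, 1, by omega⟩
    have hdec : x = (a • ((2 : ℕ) • Pi.single P 1) + b • ((3 : ℕ) • Pi.single P 1)) +
        Function.update x P 0 := by
      funext i
      rw [Pi.add_apply, Pi.add_apply, Function.update_apply, Pi.smul_apply, Pi.smul_apply,
        Pi.smul_apply, Pi.smul_apply, Pi.single_apply]
      by_cases hiP : i = P
      · subst hiP
        simp [hab]
        ring
      · simp [hiP]
    rw [hdec]
    refine AddSubmonoid.add_mem _ (AddSubmonoid.add_mem _ ?_ ?_) ?_
    · exact AddSubmonoid.nsmul_mem _ (AddSubmonoid.subset_closure memB2) _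
    · exact AddSubmonoid.nsmul_mem _ (AddSubmonoid.subset_closure memB3) _
    · exact mem_closure_of_apply_eq_zero hp h k (by simp [hP])

lemma gapPred_iff {p : ℕ} (hp : 2 ≤ p) (h : ℕ) {k : Fin p} (hk : (k : ℕ) < p - 1)
    (x : Fin p → ℕ) :
    gapPred p h hp k x ↔ ∃ m : ℕ, m < h ∧
      x = Pi.single (⟨p - 1, by omega⟩ : Fin p) 1 + m • Pi.single k 1 := by
  have hkP : k ≠ (⟨p - 1, by omega⟩ : Fin p) := Fin.ne_of_val_ne (by simpa using by omega)
  constructor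
  · rintro ⟨h1, h2, h3⟩
    refine ⟨x k, h2, ?_⟩
    funext i
    rw [Pi.add_apply, Pi.smul_apply, Pi.single_apply, Pi.single_apply]
    by_cases hiP : i = (⟨p - 1, by omega⟩ : Fin p)
    · subst hiP
      simp [Ne.symm hkP, h1]
    · by_cases hik : i = k
      · subst hik
        simp [hiP]
      · simp [hiP, hik, h3 i hiP hik]
  · rintro ⟨m, hm, rfl⟩
    refine ⟨?_, ?_, ?_⟩
    · rw [Pi.add_apply, Pi.smul_apply, Pi.single_apply, Pi.single_apply]
      simp [Ne.symm hkP]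
    · rw [Pi.add_apply, Pi.smul_apply, Pi.single_apply, Pi.single_apply]
      simp [hkP]
      omega
    · intro j hj1 hj2
      rw [Pi.add_apply, Pi.smul_apply, Pi.single_apply, Pi.single_apply]
      simp [hj1, hj2]

lemma gens_ne_zero {p h : ℕ} {hp : 2 ≤ p} {k : Fin p} {g : Fin p → ℕ}
    (hg : g ∈ gens9 p h hp k) : g ≠ 0 := by
  rintro rfl
  rcases hg with (⟨j, hj, hz⟩ | hB) | ⟨j, hj1, hj2, hz⟩
  · have := congrFun hz j
    simp at this
  · rcases hB with hz | hz | hz <;>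
    · have := congrFun hz (⟨p - 1, by omega⟩ : Fin p)
      simp [Pi.single_apply] at this
      try omega
  · have := congrFun hz (⟨p - 1, by omega⟩ : Fin p)
    simp [Pi.single_apply, Ne.symm hj1] at this


lemma minGens_subset {p h : ℕ} (hp : 2 ≤ p) (k : Fin p) {s : Fin p → ℕ}
    (hs : IsMinGen ((AddSubmonoid.closure (gens9 p h hp k) : AddSubmonoid (Fin p → ℕ)) :
      Set (Fin p → ℕ)) s) : s ∈ gens9 p h hp k := by
  obtain ⟨hsS, hs0, hmin⟩ := hs
  obtain ⟨l, hl, hsum⟩ := AddSubmonoid.exists_multiset_of_mem_closure hsS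
  have hl0 : l ≠ 0 := by
    rintro rfl
    simp at hsum
    exact hs0 hsum.symm
  obtain ⟨a, ha⟩ := Multiset.exists_mem_of_ne_zero hl0
  obtain ⟨t, rfl⟩ := Multiset.exists_cons_of_mem ha
  by_cases ht : t = 0
  · subst ht
    rw [Multiset.sum_cons, Multiset.sum_zero, add_zero] at hsum
    rw [← hsum]
    exact hl a (Multiset.mem_cons_self a 0)
  · exfalso
    have hat : a + t.sum = s := by rwa [Multiset.sum_cons] at hsum
    have haG : a ∈ gens9 p h hp k := hl a (Multiset.mem_cons_self a t)
    have htS : t.sum ∈ AddSubmonoid.closure (gens9 p h hp k) :=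
      AddSubmonoid.multiset_sum_mem _ t fun y hy =>
        AddSubmonoid.subset_closure (hl y (Multiset.mem_cons_of_mem hy))
    have ht0 : t.sum ≠ 0 := by
      intro e
      rw [Multiset.sum_eq_zero_iff] at e
      obtain ⟨b, hb⟩ := Multiset.exists_mem_of_ne_zero ht
      exact gens_ne_zero (hl b (Multiset.mem_cons_of_mem hb)) (e b hb)
    exact hmin a (AddSubmonoid.subset_closure haG) t.sum htS (gens_ne_zero haG) ht0 hat

set_option maxHeartbeats 2000000 in
lemma subset_minGens {p : ℕ} (hp : 2 ≤ p) {h : ℕ} (hh : 1 < h) {k : Fin p}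
    (hk : (k : ℕ) < p - 1) {g : Fin p → ℕ} (hg : g ∈ gens9 p h hp k) :
    IsMinGen ((AddSubmonoid.closure (gens9 p h hp k) : AddSubmonoid (Fin p → ℕ)) :
      Set (Fin p → ℕ)) g := by
  have hkP : k ≠ (⟨p - 1, by omega⟩ : Fin p) := Fin.ne_of_val_ne (by simpa using by omega)
  refine ⟨AddSubmonoid.subset_closure hg, gens_ne_zero hg, ?_⟩
  intro a haS b hbS ha0 hb0 hab
  have hco : ∀ i, a i + b i = g i := fun i => by
    have := congrFun hab i
    rwa [Pi.add_apply] at this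
  obtain ⟨ia, hia⟩ : ∃ i, a i ≠ 0 := Function.ne_iff.mp ha0
  obtain ⟨ib, hib⟩ : ∃ i, b i ≠ 0 := Function.ne_iff.mp hb0
  rcases hg with (⟨j, hj, rfl⟩ | hB) | ⟨j, hj1, hj2, rfl⟩
  · -- g = e_j
    have h1 := hco ia
    have h2 := hco ib
    rw [Pi.single_apply] at h1 h2
    by_cases e1 : ia = j
    · by_cases e2 : ib = j
      · subst e1; subst e2; simp at h1; omega
      · simp [e2] at h2; omega
    · simp [e1] at h1; omega
  · -- key subclaim used in all B cases and C: a gap contradiction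
    have hgap : ∀ c : Fin p → ℕ, c ∈ AddSubmonoid.closure (gens9 p h hp k) →
        c ⟨p - 1, by omega⟩ = 1 → c k < h →
        (∀ j : Fin p, j ≠ ⟨p - 1, by omega⟩ → j ≠ k → c j = 0) → False := by
      intro c hc h1 h2 h3
      exact not_gapPred_of_mem hp (by omega) hk hc ⟨h1, h2, h3⟩
    rcases hB with rfl | rfl | rfl
    · -- g = 2 e_P
      have hP := hco ⟨p - 1, by omega⟩
      rw [Pi.smul_apply, Pi.single_apply, if_pos rfl, smul_eq_mul] at hP
      have hz : ∀ j : Fin p, j ≠ ⟨p - 1, by omega⟩ → a j = 0 ∧ b j = 0 := by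
        intro j hjne
        have := hco j
        rw [Pi.smul_apply, Pi.single_apply, if_neg hjne, smul_eq_mul] at this
        omega
      have haP : a ⟨p - 1, by omega⟩ ≠ 0 := by
        by_cases e : ia = (⟨p - 1, by omega⟩ : Fin p)
        · rwa [← e]
        · exact absurd (hz ia e).1 hia
      have hbP : b ⟨p - 1, by omega⟩ ≠ 0 := by
        by_cases e : ib = (⟨p - 1, by omega⟩ : Fin p)
        · rwa [← e]
        · exact absurd (hz ib e).2 hib
      exact hgap a haS (by omega) (by have := (hz k hkP).1; omega)
        (fun j hj1 _ => (hz j hj1).1)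
    · -- g = 3 e_P
      have hP := hco ⟨p - 1, by omega⟩
      rw [Pi.smul_apply, Pi.single_apply, if_pos rfl, smul_eq_mul] at hP
      have hz : ∀ j : Fin p, j ≠ ⟨p - 1, by omega⟩ → a j = 0 ∧ b j = 0 := by
        intro j hjne
        have := hco j
        rw [Pi.smul_apply, Pi.single_apply, if_neg hjne, smul_eq_mul] at this
        omega
      have haP : a ⟨p - 1, by omega⟩ ≠ 0 := by
        by_cases e : ia = (⟨p - 1, by omega⟩ : Fin p)
        · rwa [← e]
        · exact absurd (hz ia e).1 hia
      have hbP : b ⟨p - 1, by omega⟩ ≠ 0 := by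
        by_cases e : ib = (⟨p - 1, by omega⟩ : Fin p)
        · rwa [← e]
        · exact absurd (hz ib e).2 hib
      by_cases e1 : a ⟨p - 1, by omega⟩ = 1
      · exact hgap a haS e1 (by have := (hz k hkP).1; omega) (fun j hj1 _ => (hz j hj1).1)
      · exact hgap b hbS (by omega) (by have := (hz k hkP).2; omega)
          (fun j hj1 _ => (hz j hj1).2)
    · -- g = e_P + h e_k
      have hPk : (⟨p - 1, by omega⟩ : Fin p) ≠ k := Ne.symm hkP
      have hP := hco ⟨p - 1, by omega⟩
      have hK := hco k
      simp [Pi.single_apply, hPk, hkP] at hP hK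
      have hz : ∀ j : Fin p, j ≠ ⟨p - 1, by omega⟩ → j ≠ k → a j = 0 ∧ b j = 0 := by
        intro j hjne hjk
        have := hco j
        simp [Pi.single_apply, hjne, hjk] at this
        omega
      have key : ∀ c d : Fin p → ℕ, c ∈ AddSubmonoid.closure (gens9 p h hp k) →
          c ⟨p - 1, by omega⟩ = 1 → d ⟨p - 1, by omega⟩ = 0 → d ≠ 0 →
          (∀ j : Fin p, j ≠ ⟨p - 1, by omega⟩ → j ≠ k → c j = 0 ∧ d j = 0) →
          c k + d k = h → False := by
        intro c d hc h1 h2 hd0 h3 h4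
        obtain ⟨i, hi⟩ : ∃ i, d i ≠ 0 := Function.ne_iff.mp hd0
        have hik : i = k := by
          by_contra hik
          by_cases hiP : i = (⟨p - 1, by omega⟩ : Fin p)
          · exact hi (hiP ▸ h2)
          · exact hi (h3 i hiP hik).2
        subst hik
        exact hgap c hc h1 (by omega) (fun j hj1 hj2 => (h3 j hj1 hj2).1)
      by_cases e1 : a ⟨p - 1, by omega⟩ = 1
      · exact key a b haS e1 (by omega) hb0 (fun j h1 h2 => hz j h1 h2) hK
      · exact key b a hbS (by omega) (by omega) ha0
          (fun j h1 h2 => ⟨(hz j h1 h2).2, (hz j h1 h2).1⟩) (by omega)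
  · -- g = e_P + e_j, j ≠ P, k
    have hPj : (⟨p - 1, by omega⟩ : Fin p) ≠ j := Ne.symm hj1
    have hP := hco ⟨p - 1, by omega⟩
    have hJ := hco j
    simp [Pi.single_apply, hPj, hj1] at hP hJ
    have hz : ∀ i : Fin p, i ≠ ⟨p - 1, by omega⟩ → i ≠ j → a i = 0 ∧ b i = 0 := by
      intro i hine hij
      have := hco i
      simp [Pi.single_apply, hine, hij] at this
      omega
    have hgap : ∀ c : Fin p → ℕ, c ∈ AddSubmonoid.closure (gens9 p h hp k) →
        c ⟨p - 1, by omega⟩ = 1 → c k < h →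
        (∀ i : Fin p, i ≠ ⟨p - 1, by omega⟩ → i ≠ k → c i = 0) → False := by
      intro c hc h1 h2 h3
      exact not_gapPred_of_mem hp (by omega) hk hc ⟨h1, h2, h3⟩
    have key : ∀ c d : Fin p → ℕ, c ∈ AddSubmonoid.closure (gens9 p h hp k) →
        c ⟨p - 1, by omega⟩ = 1 → d ⟨p - 1, by omega⟩ = 0 → d ≠ 0 →
        (∀ i : Fin p, i ≠ ⟨p - 1, by omega⟩ → i ≠ j → c i = 0 ∧ d i = 0) →
        c j + d j = 1 → False := by
      intro c d hc h1 h2 hd0 h3 h4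
      obtain ⟨i, hi⟩ : ∃ i, d i ≠ 0 := Function.ne_iff.mp hd0
      have hij : i = j := by
        by_contra hij
        by_cases hiP : i = (⟨p - 1, by omega⟩ : Fin p)
        · exact hi (hiP ▸ h2)
        · exact hi (h3 i hiP hij).2
      have hdj : d j ≠ 0 := hij ▸ hi
      have hcj : c j = 0 := by omega
      refine hgap c hc h1 ?_ ?_
      · have := (h3 k hkP (fun e => hj2 e.symm)).1
        omega
      · intro i hiP hik
        by_cases hij : i = j
        · subst hij; exact hcj
        · exact (h3 i hiP hij).1
    by_cases e1 : a ⟨p - 1, by omega⟩ = 1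
    · exact key a b haS e1 (by omega) hb0 (fun i h1 h2 => hz i h1 h2) hJ
    · exact key b a hbS (by omega) (by omega) ha0
        (fun i h1 h2 => ⟨(hz i h1 h2).2, (hz i h1 h2).1⟩) (by omega)

lemma single_inj {p : ℕ} : Function.Injective (fun j : Fin p => (Pi.single j 1 : Fin p → ℕ)) := by
  intro i j e
  by_contra hij
  have := congrFun e i
  simp [Pi.single_apply, hij] at this

lemma gens_ncard {p : ℕ} (hp : 2 ≤ p) (h : ℕ) {k : Fin p}
    (hk : (k : ℕ) < p - 1) : (gens9 p h hp k).ncard = 2 * p := by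
  have hkP : k ≠ (⟨p - 1, by omega⟩ : Fin p) := Fin.ne_of_val_ne (by simpa using by omega)
  set P : Fin p := ⟨p - 1, by omega⟩ with hPdef
  set A : Set (Fin p → ℕ) := {x | ∃ j : Fin p, j ≠ P ∧ x = Pi.single j 1} with hAdef
  set B : Set (Fin p → ℕ) := {(2 : ℕ) • Pi.single P 1, (3 : ℕ) • Pi.single P 1,
    Pi.single P 1 + h • Pi.single k 1} with hBdef
  set C : Set (Fin p → ℕ) := {x | ∃ j : Fin p, j ≠ P ∧ j ≠ k ∧
    x = Pi.single P 1 + Pi.single j 1} with hCdef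
  have hgens : gens9 p h hp k = (A ∪ B) ∪ C := rfl
  have hA : A = (fun j : Fin p => (Pi.single j 1 : Fin p → ℕ)) '' {j | j ≠ P} := by
    ext x
    simp only [Set.mem_image, Set.mem_setOf_eq, hAdef]
    exact ⟨fun ⟨j, h1, h2⟩ => ⟨j, h1, h2.symm⟩, fun ⟨j, h1, h2⟩ => ⟨j, h1, h2.symm⟩⟩
  have hC : C = (fun j : Fin p => (Pi.single P 1 + Pi.single j 1 : Fin p → ℕ)) ''
      {j | j ≠ P ∧ j ≠ k} := by
    ext x
    simp only [Set.mem_image, Set.mem_setOf_eq, hCdef]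
    exact ⟨fun ⟨j, h1, h2, h3⟩ => ⟨j, ⟨h1, h2⟩, h3.symm⟩,
      fun ⟨j, ⟨h1, h2⟩, h3⟩ => ⟨j, h1, h2, h3.symm⟩⟩
  have hAfin : A.Finite := by rw [hA]; exact (Set.toFinite _).image _
  have hBfin : B.Finite := Set.Finite.insert _ (Set.Finite.insert _ (Set.finite_singleton _))
  have hCfin : C.Finite := by rw [hC]; exact (Set.toFinite _).image _
  have hPcompl : ({j : Fin p | j ≠ P}).ncard = p - 1 := by
    have e1 : {j : Fin p | j ≠ P} = Set.univ \ {P} := by ext j; simp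
    rw [e1, Set.ncard_diff (Set.subset_univ _), Set.ncard_univ, Set.ncard_singleton,
      Nat.card_eq_fintype_card, Fintype.card_fin]
  have hPkcompl : ({j : Fin p | j ≠ P ∧ j ≠ k}).ncard = p - 2 := by
    have e1 : {j : Fin p | j ≠ P ∧ j ≠ k} = Set.univ \ {P, k} := by ext j; simp [not_or]
    rw [e1, Set.ncard_diff (Set.subset_univ _), Set.ncard_univ,
      Set.ncard_pair (Ne.symm hkP), Nat.card_eq_fintype_card, Fintype.card_fin]
  have hAcard : A.ncard = p - 1 := by
    rw [hA, Set.ncard_image_of_injective _ single_inj, hPcompl]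
  have hCinj : Function.Injective
      (fun j : Fin p => (Pi.single P 1 + Pi.single j 1 : Fin p → ℕ)) := by
    intro i j e
    exact single_inj (add_left_cancel e)
  have hCcard : C.ncard = p - 2 := by
    rw [hC, Set.ncard_image_of_injective _ hCinj, hPkcompl]
  have ne12 : ((2 : ℕ) • Pi.single P 1 : Fin p → ℕ) ≠ (3 : ℕ) • Pi.single P 1 := by
    intro e
    have := congrFun e P
    simp at this
  have ne13 : ((2 : ℕ) • Pi.single P 1 : Fin p → ℕ) ≠ Pi.single P 1 + h • Pi.single k 1 := by
    intro e
    have := congrFun e P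
    simp [Pi.single_apply, Ne.symm hkP] at this
  have ne23 : ((3 : ℕ) • Pi.single P 1 : Fin p → ℕ) ≠ Pi.single P 1 + h • Pi.single k 1 := by
    intro e
    have := congrFun e P
    simp [Pi.single_apply, Ne.symm hkP] at this
  have hBcard : B.ncard = 3 := by
    have hnm : ((2 : ℕ) • Pi.single P 1 : Fin p → ℕ) ∉
        ({(3 : ℕ) • Pi.single P 1, Pi.single P 1 + h • Pi.single k 1} : Set (Fin p → ℕ)) := by
      intro hm
      rcases Set.mem_insert_iff.mp hm with e | e
      · exact ne12 e
      · exact ne13 e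
    rw [hBdef, Set.ncard_insert_of_notMem hnm, Set.ncard_pair ne23]
  have hdAB : Disjoint A B := by
    rw [Set.disjoint_left]
    rintro x ⟨j, hj, rfl⟩ (e | e | e) <;>
    · have := congrFun e P
      simp [Pi.single_apply, Ne.symm hj, Ne.symm hkP] at this
  have hdABC : Disjoint (A ∪ B) C := by
    rw [Set.disjoint_right]
    rintro x ⟨j, hj1, hj2, rfl⟩ (⟨j', hj', e⟩ | (e | e | e))
    · have := congrFun e P
      simp [Pi.single_apply, Ne.symm hj1, Ne.symm hj'] at this
    · have := congrFun e P
      simp [Pi.single_apply, Ne.symm hj1] at this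
    · have := congrFun e P
      simp [Pi.single_apply, Ne.symm hj1] at this
    · have := congrFun e j
      simp [Pi.single_apply, hj1, hj2, Ne.symm hj1] at this
  rw [hgens, Set.ncard_union_eq hdABC (hAfin.union hBfin) hCfin,
    Set.ncard_union_eq hdAB hAfin hBfin, hAcard, hBcard, hCcard]
  omega

theorem stmt9 {p : ℕ} (hp : 2 ≤ p) (h : ℕ) (hh : 1 < h)
    (k : Fin p) (hk : (k : ℕ) < p - 1) :
    {x : Fin p → ℕ | x ∉ AddSubmonoid.closure (gens9 p h hp k)} =
      {x : Fin p → ℕ | ∃ m : ℕ, m < h ∧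
        x = Pi.single (⟨p - 1, by omega⟩ : Fin p) 1 + m • Pi.single k 1} ∧
    {x : Fin p → ℕ | x ∉ AddSubmonoid.closure (gens9 p h hp k)}.Finite ∧
    {x : Fin p → ℕ | x ∉ AddSubmonoid.closure (gens9 p h hp k)}.ncard = h ∧
    (minGens ((AddSubmonoid.closure (gens9 p h hp k) : AddSubmonoid (Fin p → ℕ)) :
        Set (Fin p → ℕ))).ncard = 2 * p := by
  have hkP : k ≠ (⟨p - 1, by omega⟩ : Fin p) := Fin.ne_of_val_ne (by simpa using by omega)
  have hset : {x : Fin p → ℕ | x ∉ AddSubmonoid.closure (gens9 p h hp k)} =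
      {x : Fin p → ℕ | ∃ m : ℕ, m < h ∧
        x = Pi.single (⟨p - 1, by omega⟩ : Fin p) 1 + m • Pi.single k 1} := by
    ext x
    simp only [Set.mem_setOf_eq]
    rw [← gapPred_iff hp h hk x]
    constructor
    · intro hx
      by_contra hng
      exact hx (mem_closure_of_not_gapPred hp hk hng)
    · intro hg hx
      exact not_gapPred_of_mem hp (by omega) hk hx hg
  have himg : {x : Fin p → ℕ | ∃ m : ℕ, m < h ∧
        x = Pi.single (⟨p - 1, by omega⟩ : Fin p) 1 + m • Pi.single k 1}
      = (fun m : ℕ => (Pi.single (⟨p - 1, by omega⟩ : Fin p) 1 + m • Pi.single k 1 :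
          Fin p → ℕ)) '' Set.Iio h := by
    ext x
    simp only [Set.mem_image, Set.mem_setOf_eq, Set.mem_Iio]
    exact ⟨fun ⟨m, h1, h2⟩ => ⟨m, h1, h2.symm⟩, fun ⟨m, h1, h2⟩ => ⟨m, h1, h2.symm⟩⟩
  have hinj : Function.Injective
      (fun m : ℕ => (Pi.single (⟨p - 1, by omega⟩ : Fin p) 1 + m • Pi.single k 1 :
        Fin p → ℕ)) := by
    intro m n e
    have := congrFun e k
    simp [Pi.single_apply, hkP] at this
    exact this
  refine ⟨hset, ?_, ?_, ?_⟩
  · rw [hset, himg]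
    exact (Set.finite_Iio h).image _
  · rw [hset, himg, Set.ncard_image_of_injective _ hinj]
    have hr : Set.Iio h = ↑(Finset.range h) := by ext m; simp
    rw [hr, Set.ncard_coe_finset, Finset.card_range]
  · have hmg : minGens ((AddSubmonoid.closure (gens9 p h hp k) :
        AddSubmonoid (Fin p → ℕ)) : Set (Fin p → ℕ)) = gens9 p h hp k :=
      Set.Subset.antisymm (fun s hs => minGens_subset hp k hs)
        (fun g hg => subset_minGens hp hh hk hg)
    rw [hmg]
    exact gens_ncard hp h hk
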